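/- Let N ≥ 1 and let 0 ≤ m_1 < m_2 < … < m_N < d be natural numbers. Then there exists a nonzero constant c ∈ ℂ such that the Wronskian of the N+1 polynomials P_{m_1;d}, …, P_{m_N;d}, (x+1)^d equals c · x^{m_1+⋯+m_N − N(N−1)/2} · (x+1)^{d−N}. (Note that m_1+⋯+m_N − N(N−1)/2 ≥ 0 since m_i ≥ i−1 for each i.) -/

import Mathlib

open Polynomial

/-- The truncated binomial `P_{k;d}(x) = ∑_{i=0}^{k} (d choose i) x^i` as a complex
polynomial. -/
noncomputable def truncBinom (d k : ℕ) : Polynomial ℂ :=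
  ∑ i ∈ Finset.range (k + 1), Polynomial.C (Nat.choose d i : ℂ) * Polynomial.X ^ i

/-- The Wronskian of `n` polynomials: the determinant of the `n × n` matrix whose
`(i,j)` entry is the `j`-th derivative of `f i` (`0 ≤ j ≤ n-1`). -/
noncomputable def polyWronskian {n : ℕ} (f : Fin n → Polynomial ℂ) : Polynomial ℂ :=
  Matrix.det (Matrix.of fun i j : Fin n => Polynomial.derivative^[(j : ℕ)] (f i))

/-- The operator `L f = (X+1) f' - d f`. -/
noncomputable def Lop (d : ℕ) (f : Polynomial ℂ) : Polynomial ℂ :=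
  (X + 1) * derivative f - C (d : ℂ) * f

lemma iter_deriv_add (n : ℕ) (f g : Polynomial ℂ) :
    derivative^[n] (f + g) = derivative^[n] f + derivative^[n] g :=
  iterate_map_add derivative.toAddMonoidHom n f g

lemma iter_deriv_sub (n : ℕ) (f g : Polynomial ℂ) :
    derivative^[n] (f - g) = derivative^[n] f - derivative^[n] g :=
  iterate_map_sub derivative.toAddMonoidHom n f g

lemma iter_deriv_zero (n : ℕ) :
    derivative^[n] (0 : Polynomial ℂ) = 0 :=
  iterate_map_zero derivative.toAddMonoidHom n

lemma Lop_truncBinom (d k : ℕ) (hk : k < d) :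
    Lop d (truncBinom d k) = C (((k : ℂ) - d) * (Nat.choose d k : ℂ)) * X ^ k := by
  induction k with
  | zero => simp [Lop, truncBinom]
  | succ k ih =>
    have hk' : k < d := Nat.lt_of_succ_lt hk
    have hsplit : truncBinom d (k+1)
        = truncBinom d k + C (Nat.choose d (k+1) : ℂ) * X ^ (k+1) := by
      simp [truncBinom, Finset.sum_range_succ]
    have hrec : Lop d (truncBinom d (k+1))
        = Lop d (truncBinom d k)
          + C (Nat.choose d (k+1) : ℂ) * ((X+1) * (C ((k:ℂ)+1) * X ^ k) - C (d:ℂ) * X ^ (k+1)) := by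
      simp only [hsplit, Lop, derivative_add, derivative_C_mul, derivative_X_pow,
        Nat.add_sub_cancel, Nat.cast_add, Nat.cast_one, C_add, C_1]
      ring
    have hchoose : ((k:ℂ)+1) * (Nat.choose d (k+1) : ℂ) = ((d:ℂ) - k) * (Nat.choose d k : ℂ) := by
      have := Nat.choose_succ_right_eq d k
      have hcast : ((Nat.choose d (k+1) * (k+1) : ℕ) : ℂ) = ((Nat.choose d k * (d - k) : ℕ) : ℂ) := by
        exact_mod_cast congrArg (Nat.cast (R := ℂ)) this
      push_cast [Nat.cast_sub hk'.le] at hcast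
      linear_combination hcast
    have hC : (C (((k:ℂ)+1) * (Nat.choose d (k+1):ℂ)) : Polynomial ℂ)
        = C (((d:ℂ) - k) * (Nat.choose d k:ℂ)) := congrArg C hchoose
    rw [hrec, ih hk']
    simp only [map_mul, map_add, map_sub, map_one, Nat.cast_add, Nat.cast_one] at hC ⊢
    linear_combination (X : Polynomial ℂ)^k * hC

lemma Lop_pow (d : ℕ) (hd : 1 ≤ d) : Lop d ((X + 1) ^ d : Polynomial ℂ) = 0 := by
  have h1 : derivative ((X + 1) ^ d : Polynomial ℂ) = C (d : ℂ) * (X + 1) ^ (d - 1) := by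
    rw [derivative_pow]
    simp [C_eq_natCast]
  rw [Lop, h1]
  have h2 : ((X:Polynomial ℂ) + 1) * (X + 1) ^ (d - 1) = (X + 1) ^ d := by
    rw [← pow_succ']
    congr 1
    omega
  rw [mul_left_comm, h2]
  ring

lemma iter_deriv_X1_mul (n : ℕ) (f : Polynomial ℂ) :
    derivative^[n] ((X + 1) * f)
      = (X + 1) * derivative^[n] f + n • derivative^[n-1] f := by
  induction n generalizing f with
  | zero => simp
  | succ n ih =>
    rw [Function.iterate_succ_apply]
    have h3 : derivative ((X + 1) * f) = (X + 1) * derivative f + f := by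
      rw [derivative_mul]; simp; ring
    rw [h3, iter_deriv_add, ih (derivative f)]
    cases n with
    | zero => simp
    | succ n =>
      rw [← Function.iterate_succ_apply, ← Function.iterate_succ_apply]
      simp only [Nat.succ_eq_add_one, Nat.add_sub_cancel, add_smul, one_smul]
      abel

lemma iter_deriv_Lop (d i : ℕ) (f : Polynomial ℂ) :
    derivative^[i] (Lop d f)
      = (X + 1) * derivative^[i+1] f + C ((i:ℂ) - d) * derivative^[i] f := by
  rw [Lop, iter_deriv_sub, iter_deriv_X1_mul, iterate_derivative_C_mul,
    ← Function.iterate_succ_apply]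
  cases i with
  | zero => simp [sub_eq_add_neg]
  | succ k =>
    rw [← Function.iterate_succ_apply]
    simp only [Nat.succ_eq_add_one, Nat.add_sub_cancel, nsmul_eq_mul]
    push_cast
    simp only [map_sub, map_add, C_1, C_eq_natCast]
    ring

lemma descFactorial_cast (a j : ℕ) :
    ((a.descFactorial j : ℕ) : ℂ) = ∏ k ∈ Finset.range j, ((a:ℂ) - k) := by
  rcases le_or_gt j a with h | h
  · rw [Nat.descFactorial_eq_prod_range, Nat.cast_prod]
    exact Finset.prod_congr rfl fun i hi =>
      Nat.cast_sub ((Finset.mem_range.mp hi).le.trans h)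
  · rw [Nat.descFactorial_eq_zero_iff_lt.mpr h]
    symm
    rw [Nat.cast_zero]
    exact Finset.prod_eq_zero (Finset.mem_range.mpr h) (by simp)

lemma wronskian_monomials (N : ℕ) (m : Fin N → ℕ) (hmono : StrictMono m) :
    ∃ V : ℂ, V ≠ 0 ∧
      Matrix.det (Matrix.of fun i j : Fin N => derivative^[(j:ℕ)] ((X : Polynomial ℂ) ^ (m i)))
        = C V * X ^ ((∑ i, m i) - N*(N-1)/2) := by
  classical
  set e := (∑ i, m i) - N*(N-1)/2 with he
  set B : Matrix (Fin N) (Fin N) ℂ :=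
    Matrix.of (fun i j : Fin N => ((m i).descFactorial (j:ℕ) : ℂ)) with hBdef
  have hsum_i : (∑ i : Fin N, (i:ℕ)) = N*(N-1)/2 := by
    rw [Fin.sum_univ_eq_sum_range (fun i => i) N]
    exact Finset.sum_range_id N
  refine ⟨B.det, ?_, ?_⟩
  · set p : Fin N → Polynomial ℂ := fun j => ∏ k ∈ Finset.range (j:ℕ), (X - C (k:ℂ)) with hp
    have hmonic : ∀ j, (p j).Monic := fun j =>
      monic_prod_of_monic _ _ fun k _ => monic_X_sub_C _
    have hdeg : ∀ j, (p j).natDegree = (j:ℕ) := fun j => by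
      rw [hp, natDegree_prod_of_monic _ _ fun k _ => monic_X_sub_C _]
      simp only [natDegree_X_sub_C]
      simp
    have hB : B = Matrix.of fun i j : Fin N => (p j).eval ((m i : ℂ)) := by
      ext i j
      simp only [hBdef, Matrix.of_apply, hp, eval_prod, eval_sub, eval_X, eval_C]
      exact descFactorial_cast (m i) j
    rw [hB, ← Matrix.det_eval_matrixOfPolynomials_eq_det_vandermonde
      (fun i => ((m i : ℂ))) p hdeg hmonic]
    refine Matrix.det_vandermonde_ne_zero_iff.mpr ?_
    exact fun a b hab => hmono.injective (Nat.cast_injective hab)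
  · rw [Matrix.det_apply', Matrix.det_apply']
    have hterm : ∀ σ : Equiv.Perm (Fin N),
        (((Equiv.Perm.sign σ : ℤ) : Polynomial ℂ) * ∏ i : Fin N,
            (Matrix.of fun i j : Fin N => derivative^[(j:ℕ)] ((X : Polynomial ℂ) ^ (m i))) (σ i) i)
          = C (((Equiv.Perm.sign σ : ℤ) : ℂ) * ∏ i : Fin N, B (σ i) i) * X ^ e := by
      intro σ
      simp only [Matrix.of_apply, iterate_derivative_X_pow_eq_C_mul, hBdef]
      rw [Finset.prod_mul_distrib, ← map_prod, Finset.prod_pow_eq_pow_sum]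
      rw [map_mul, map_intCast]
      by_cases hσ : ∀ i : Fin N, (i:ℕ) ≤ m (σ i)
      · have hexp : (∑ i : Fin N, (m (σ i) - (i:ℕ))) = e := by
          rw [Finset.sum_tsub_distrib _ (fun i _ => hσ i), Equiv.sum_comp σ m, hsum_i]
        rw [hexp]; ring
      · push_neg at hσ
        obtain ⟨i, hi⟩ := hσ
        have hz : (∏ i : Fin N, ((m (σ i)).descFactorial (i:ℕ) : ℂ)) = 0 :=
          Finset.prod_eq_zero (Finset.mem_univ i)
            (by rw [Nat.descFactorial_eq_zero_iff_lt.mpr hi, Nat.cast_zero])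
        rw [hz]
        simp
    rw [Finset.sum_congr rfl fun σ _ => hterm σ, ← Finset.sum_mul, ← map_sum]

theorem wronskian_truncBinoms (N d : ℕ) (hN : 1 ≤ N)
    (m : Fin N → ℕ) (hmono : StrictMono m) (hlt : ∀ i, m i < d) :
    ∃ c : ℂ, c ≠ 0 ∧
      polyWronskian
          (Fin.snoc (fun i : Fin N => truncBinom d (m i))
            ((Polynomial.X + 1) ^ d : Polynomial ℂ))
        = Polynomial.C c * Polynomial.X ^ ((∑ i, m i) - N * (N - 1) / 2)
            * (Polynomial.X + 1) ^ (d - N) := by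
  classical
  have hd1 : 1 ≤ d := Nat.one_le_iff_ne_zero.mpr (by
    intro h; exact absurd (hlt ⟨0, hN⟩) (by omega))
  have hle : ∀ i : Fin N, (i:ℕ) ≤ m i := by
    rintro ⟨v, hv⟩
    induction v with
    | zero => exact Nat.zero_le _
    | succ k ih =>
      have hk : k < N := Nat.lt_of_succ_lt hv
      have h1 := ih hk
      have h2 : m ⟨k, hk⟩ < m ⟨k+1, hv⟩ := hmono (by simp [Fin.lt_def])
      exact Nat.lt_of_le_of_lt h1 h2
  have hNd : N ≤ d := by
    have h1 := hle ⟨N-1, by omega⟩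
    have h2 := hlt ⟨N-1, by omega⟩
    simp only at h1 h2
    omega
  set e := (∑ i, m i) - N * (N - 1) / 2 with he
  set f : Fin (N+1) → Polynomial ℂ :=
    Fin.snoc (fun i : Fin N => truncBinom d (m i)) ((X + 1) ^ d) with hf
  set M : Matrix (Fin (N+1)) (Fin (N+1)) (Polynomial ℂ) :=
    Matrix.of (fun i j : Fin (N+1) => derivative^[(j:ℕ)] (f i)) with hM
  set dvec : Fin (N+1) → Polynomial ℂ := fun j => if (j:ℕ) = 0 then 1 else X + 1 with hdvec
  set S : Matrix (Fin (N+1)) (Fin (N+1)) (Polynomial ℂ) :=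
    Matrix.of (fun k j : Fin (N+1) =>
      if (k:ℕ)+1 = (j:ℕ) then C (((k:ℕ):ℂ) - d) else 0) with hS
  set T := Matrix.diagonal dvec + S with hT
  set M' : Matrix (Fin (N+1)) (Fin (N+1)) (Polynomial ℂ) :=
    Matrix.of (fun i j : Fin (N+1) =>
      if (j:ℕ) = 0 then f i else derivative^[(j:ℕ)-1] (Lop d (f i))) with hM'
  have hMT : M * T = M' := by
    rw [hT, Matrix.mul_add]
    ext i j
    rw [Matrix.add_apply, Matrix.mul_diagonal]
    rcases Fin.eq_zero_or_eq_succ j with rfl | ⟨j', rfl⟩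
    · have hS0 : (M * S) i 0 = 0 := by
        rw [Matrix.mul_apply]
        exact Finset.sum_eq_zero fun k _ => by
          rw [hS, Matrix.of_apply, if_neg (by simp), mul_zero]
      rw [hS0, hdvec]
      simp [hM, hM']
    · have hSs : (M * S) i j'.succ = M i j'.castSucc * C (((j':ℕ):ℂ) - d) := by
        rw [Matrix.mul_apply]
        rw [Finset.sum_eq_single j'.castSucc]
        · rw [hS, Matrix.of_apply, if_pos (by simp)]; rfl
        · intro k _ hk
          rw [hS, Matrix.of_apply, if_neg, mul_zero]
          intro hkj
          exact hk (Fin.ext (by simpa [Fin.val_succ] using hkj))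
        · intro h; exact absurd (Finset.mem_univ _) h
      rw [hSs, hdvec]
      simp only [Fin.val_succ, Nat.add_eq_zero, Nat.succ_ne_zero, and_false, if_false,
        hM, hM', Matrix.of_apply, Nat.add_sub_cancel]
      rw [iter_deriv_Lop d (j':ℕ) (f i), Fin.coe_castSucc]
      ring
  have hTtri : T.BlockTriangular id := by
    intro a b hab
    have hba : (b:ℕ) < (a:ℕ) := hab
    rw [hT, Matrix.add_apply, Matrix.diagonal_apply_ne _ (by
      intro h; rw [h] at hba; exact lt_irrefl _ hba), hS, Matrix.of_apply, if_neg (by omega),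
      add_zero]
  have hdetT : T.det = (X + 1) ^ N := by
    rw [Matrix.det_of_upperTriangular hTtri]
    have hdiag : ∀ i, T i i = dvec i := fun i => by
      rw [hT, Matrix.add_apply, Matrix.diagonal_apply_eq, hS, Matrix.of_apply,
        if_neg (by omega), add_zero]
    rw [Finset.prod_congr rfl fun i _ => hdiag i, Fin.prod_univ_succ]
    simp [hdvec, Finset.prod_const]
  -- the minor
  have hlast : ∀ j : Fin (N+1), j ≠ 0 → M' (Fin.last N) j = 0 := by
    intro j hj
    rw [hM', Matrix.of_apply, if_neg (by
      intro h; exact hj (Fin.ext (by simpa using h)))]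
    rw [hf, Fin.snoc_last, Lop_pow d hd1, iter_deriv_zero]
  obtain ⟨V, hV0, hVeq⟩ := wronskian_monomials N m hmono
  set cc : Fin N → ℂ := fun i => ((m i : ℂ) - d) * (Nat.choose d (m i) : ℂ) with hcc
  have hminor : M'.submatrix (Fin.last N).succAbove (0:Fin (N+1)).succAbove
      = Matrix.of (fun i j : Fin N =>
          C (cc i) * derivative^[(j:ℕ)] ((X : Polynomial ℂ) ^ (m i))) := by
    ext i j
    rw [Matrix.submatrix_apply, Fin.succAbove_last, Fin.succAbove_zero]
    rw [hM', Matrix.of_apply, if_neg (by simp), Fin.val_succ, Nat.add_sub_cancel]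
    rw [hf, Fin.snoc_castSucc, Lop_truncBinom d (m i) (hlt i), iterate_derivative_C_mul]
    rw [hcc, Matrix.of_apply]
  have hdetM' : M'.det = (-1)^N * ((X+1)^d * ((∏ i, C (cc i)) * (C V * X ^ e))) := by
    rw [Matrix.det_succ_row M' (Fin.last N)]
    rw [Finset.sum_eq_single (0 : Fin (N+1))]
    · have hVeq' : Matrix.det (fun i j : Fin N =>
          derivative^[(j:ℕ)] ((X : Polynomial ℂ) ^ (m i))) = C V * X ^ e := hVeq
      have hdm : (Matrix.of fun i j : Fin N => C (cc i) * derivative^[(j:ℕ)] ((X : Polynomial ℂ) ^ (m i))).det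
          = (∏ i, C (cc i)) * Matrix.det (fun i j : Fin N =>
            derivative^[(j:ℕ)] ((X : Polynomial ℂ) ^ (m i))) := Matrix.det_mul_column _ _
      rw [hminor, hdm, hVeq']
      have h0 : M' (Fin.last N) 0 = (X+1)^d := by
        rw [hM', Matrix.of_apply]
        simp [hf, Fin.snoc_last]
      rw [h0]
      simp only [Fin.val_last, Fin.val_zero, add_zero]
      ring
    · intro j _ hj
      rw [hlast j hj, mul_zero, zero_mul]
    · intro h; exact absurd (Finset.mem_univ _) h
  have hW : polyWronskian f = M.det := by rw [polyWronskian, hM]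
  have hkey : M.det * T.det = M'.det := by rw [← Matrix.det_mul, hMT]
  rw [hdetT, hdetM'] at hkey
  set c : ℂ := (-1)^N * (∏ i, cc i) * V with hc
  refine ⟨c, ?_, ?_⟩
  · refine mul_ne_zero (mul_ne_zero (pow_ne_zero _ (neg_ne_zero.mpr one_ne_zero)) ?_) hV0
    rw [Finset.prod_ne_zero_iff]
    intro i _
    refine mul_ne_zero (sub_ne_zero.mpr ?_) ?_
    · exact fun h => (hlt i).ne (Nat.cast_injective h)
    · exact Nat.cast_ne_zero.mpr (Nat.choose_pos (hlt i).le).ne'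
  · have hX1 : ((X:Polynomial ℂ) + 1) ≠ 0 := by
      have : ((X:Polynomial ℂ) + 1) = X + C 1 := by rw [C_1]
      rw [this]
      exact (monic_X_add_C (1:ℂ)).ne_zero
    have hpow : ((X:Polynomial ℂ)+1)^d = (X+1)^(d-N) * (X+1)^N := by
      rw [← pow_add]
      congr 1
      omega
    refine mul_right_cancel₀ (pow_ne_zero N hX1) ?_
    rw [hW, hkey, hpow]
    have hprodC : (∏ i, C (cc i)) = C (∏ i, cc i) := (map_prod C cc Finset.univ).symm
    have hneg : ((-1 : Polynomial ℂ))^N = C ((-1:ℂ)^N) := by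
      rw [map_pow, map_neg, C_1]
    rw [hprodC, hneg, hc]
    rw [map_mul, map_mul]
    ring
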